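/- The set { aⁱ | i ≥ 1 } viewed as the RSRL R = { {aⁱ} | i ≥ 1 } has a point-wise Kleene star Ṙ* = { { a^{j·i} | j ≥ 0 } | i ≥ 1 } that is not a rational set of regular languages. -/

import Mathlib

open Language Computability

/-- A substitution mapping symbols to languages, extended multiplicatively to words. -/
def phiW {Δ A : Type} (φ : Δ → Language A) (w : List Δ) : Language A :=
  (w.map φ).prod

/-- Image of a language of words under the extended substitution. -/
def phiL {Δ A : Type} (φ : Δ → Language A) (L : Set (List Δ)) : Language A :=
  ⋃ w ∈ L, phiW φ w

/-- The set of languages generated by a generator language `K` and substitution `φ`. -/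
def RSet {Δ A : Type} (φ : Δ → Language A) (K : Language Δ) : Set (Language A) :=
  { L | ∃ w ∈ K, phiW φ w = L }

/-- Rational sets of regular languages. -/
def IsRSRL {A : Type} (R : Set (Language A)) : Prop :=
  ∃ (Δ : Type) (_ : Fintype Δ) (K : Language Δ) (φ : Δ → Language A),
    K.IsRegular ∧ ([] : List Δ) ∉ K ∧ (∀ δ, (φ δ).IsRegular) ∧ R = RSet φ K

lemma phiW_nil {Δ A : Type} (φ : Δ → Language A) : phiW φ [] = 1 := rfl

lemma phiW_cons {Δ A : Type} (φ : Δ → Language A) (δ : Δ) (w : List Δ) :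
    phiW φ (δ :: w) = φ δ * phiW φ w := by
  simp [phiW]

lemma nil_mem_phiW {Δ A : Type} (φ : Δ → Language A) (w : List Δ)
    (h : ∀ δ ∈ w, ([] : List A) ∈ φ δ) : ([] : List A) ∈ phiW φ w := by
  induction w with
  | nil => exact Language.nil_mem_one
  | cons δ w ih =>
    have h1 : ([] : List A) ∈ φ δ * phiW φ w :=
      Language.append_mem_mul (h δ (by simp)) (ih fun d hd => h d (by simp [hd]))
    rw [phiW_cons]; simpa using h1

lemma mem_phiW_of_mem {Δ A : Type} (φ : Δ → Language A) {w : List Δ}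
    (h : ∀ δ ∈ w, ([] : List A) ∈ φ δ) {δ₀ : Δ} (hδ : δ₀ ∈ w) {v : List A}
    (hv : v ∈ φ δ₀) : v ∈ phiW φ w := by
  induction w with
  | nil => simp at hδ
  | cons δ w ih =>
    rw [phiW_cons]
    rcases List.mem_cons.mp hδ with rfl | hδ'
    · have : v ++ [] ∈ φ δ₀ * phiW φ w :=
        Language.append_mem_mul hv (nil_mem_phiW φ w fun d hd => h d (by simp [hd]))
      simpa using this
    · have : [] ++ v ∈ φ δ * phiW φ w :=
        Language.append_mem_mul (h δ (by simp))
          (ih (fun d hd => h d (by simp [hd])) hδ')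
      simpa using this

lemma nil_mem_factor {Δ A : Type} (φ : Δ → Language A) {w : List Δ}
    (h : ([] : List A) ∈ phiW φ w) : ∀ δ ∈ w, ([] : List A) ∈ φ δ := by
  induction w with
  | nil => simp
  | cons δ w ih =>
    rw [phiW_cons, Language.mem_mul] at h
    obtain ⟨a, ha, b, hb, hab⟩ := h
    rcases List.append_eq_nil_iff.mp hab with ⟨rfl, rfl⟩
    intro d hd
    rcases List.mem_cons.mp hd with rfl | hd'
    · exact ha
    · exact ih hb d hd'

lemma exists_short_factor {Δ A : Type} (φ : Δ → Language A) {w : List Δ} {u : List A}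
    (hu : u ∈ phiW φ w) (hne : u ≠ []) :
    ∃ δ ∈ w, ∃ v ∈ φ δ, v ≠ [] ∧ v.length ≤ u.length := by
  induction w generalizing u with
  | nil =>
    exact absurd ((Language.mem_one u).mp hu) hne
  | cons δ w ih =>
    rw [phiW_cons, Language.mem_mul] at hu
    obtain ⟨a, ha, b, hb, rfl⟩ := hu
    by_cases hae : a = []
    · subst hae
      simp only [List.nil_append] at hne ⊢
      obtain ⟨d, hd, v, hv, hvne, hvl⟩ := ih hb hne
      exact ⟨d, by simp [hd], v, hv, hvne, hvl⟩
    · exact ⟨δ, by simp, a, ha, hae, by simp⟩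

/-- The RSRL `R = { {aⁱ} | i ≥ 1 }` has a point-wise Kleene star
`Ṙ* = { (aⁱ)* | i ≥ 1 }` that is not an RSRL. -/
theorem stmt9 :
    IsRSRL { L : Language Unit | ∃ i : ℕ, 1 ≤ i ∧ L = {List.replicate i ()} } ∧
    ¬ IsRSRL { L' : Language Unit |
        ∃ L ∈ { L : Language Unit | ∃ i : ℕ, 1 ≤ i ∧ L = {List.replicate i ()} },
          L' = L∗ } := by
  constructor
  · -- Part 1: R itself is an RSRL
    refine ⟨Unit, inferInstance, {w : List Unit | w ≠ []}, fun _ => {[()]}, ?_, fun h => h rfl, ?_, ?_⟩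
    · -- K = nonempty words is regular
      refine ⟨Bool, inferInstance, ⟨fun _ _ => true, false, {b | b = true}⟩, ?_⟩
      have hfold : ∀ w : List Unit, List.foldl (fun (_ : Bool) (_ : Unit) => true) true w = true := by
        intro w; induction w <;> simp [*]
      ext w
      cases w with
      | nil =>
        simp only [DFA.mem_accepts, DFA.eval, DFA.evalFrom, List.foldl_nil]
        exact iff_of_false (by simp) (fun h => h rfl)
      | cons x xs =>
        simp only [DFA.mem_accepts, DFA.eval, DFA.evalFrom, List.foldl_cons]
        exact iff_of_true (hfold xs) (List.cons_ne_nil x xs)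
    · -- {[()]} is regular
      intro _
      refine ⟨Fin 3, inferInstance,
        ⟨fun s _ => if s = 0 then 1 else 2, 0, {s | s = 1}⟩, ?_⟩
      have hfold : ∀ w : List Unit,
          List.foldl (fun (s : Fin 3) (_ : Unit) => if s = 0 then 1 else 2) 2 w = 2 := by
        intro w; induction w <;> simp [*]
      ext w
      match w with
      | [] =>
        simp only [DFA.mem_accepts, DFA.eval, DFA.evalFrom, List.foldl_nil]
        exact iff_of_false (by decide) (fun h => by
          have h' : ([] : List Unit) = [()] := h
          exact List.cons_ne_nil _ _ h'.symm)
      | [x] =>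
        simp only [DFA.mem_accepts, DFA.eval, DFA.evalFrom, List.foldl_cons, List.foldl_nil]
        exact iff_of_true rfl rfl
      | x :: y :: r =>
        simp only [DFA.mem_accepts, DFA.eval, DFA.evalFrom, List.foldl_cons]
        refine iff_of_false ?_ (fun h => by
          have h' : x :: y :: r = [()] := h
          injection h' with _ h2
          exact List.cons_ne_nil _ _ h2)
        have h2 : (if ((if True then (1 : Fin 3) else 2)) = 0 then (1 : Fin 3) else 2) = 2 := by
          decide
        rw [h2, hfold]
        decide
    · -- the generated set is exactly R
      have phiW_eq : ∀ w : List Unit,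
          phiW (fun _ => ({[()]} : Language Unit)) w = {List.replicate w.length ()} := by
        intro w
        induction w with
        | nil =>
          ext x
          simp only [phiW_nil, Language.mem_one, List.length_nil, List.replicate_zero]
          exact Set.mem_singleton_iff.symm
        | cons d w ih =>
          rw [phiW_cons, ih]
          ext x
          simp only [Language.mem_mul, Set.mem_singleton_iff, List.length_cons]
          constructor
          · rintro ⟨a, rfl, b, rfl, rfl⟩
            rfl
          · rintro rfl
            exact ⟨[()], rfl, List.replicate w.length (), rfl, rfl⟩
      ext L
      constructor
      · rintro ⟨i, hi, rfl⟩
        refine ⟨List.replicate i (), ?_, ?_⟩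
        · intro h
          have := congrArg List.length h
          rw [List.length_replicate, List.length_nil] at this
          omega
        · rw [phiW_eq]; simp
      · rintro ⟨w, hw, rfl⟩
        exact ⟨w.length, List.length_pos_iff.mpr hw, phiW_eq w⟩
  · -- Part 2: the pointwise star is not an RSRL
    rintro ⟨Δ, hfin, K, φ, _, hKnil, _, hR⟩
    haveI := hfin
    set g : Δ → ℕ := fun δ => sInf {n | 0 < n ∧ ∃ u ∈ φ δ, u.length = n} with hg
    have key : ∀ i : ℕ, 1 ≤ i → ∃ δ : Δ, g δ = i := by
      intro i hi
      have hmem : ({List.replicate i ()} : Language Unit)∗ ∈ RSet φ K := by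
        rw [← hR]
        exact ⟨{List.replicate i ()}, ⟨i, hi, rfl⟩, rfl⟩
      obtain ⟨w, hwK, hw⟩ := hmem
      have hrepne : List.replicate i () ≠ [] := by
        intro h
        have := congrArg List.length h
        rw [List.length_replicate, List.length_nil] at this
        omega
      -- every symbol of w has ε in its image
      have h0 : ∀ δ ∈ w, ([] : List Unit) ∈ φ δ := by
        apply nil_mem_factor
        rw [hw]
        exact Language.nil_mem_kstar _
      -- any nonempty word of the star has length ≥ i
      have hlong : ∀ v : List Unit, v ∈ ({List.replicate i ()} : Language Unit)∗ →
          v ≠ [] → i ≤ v.length := by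
        intro v hv hvne
        rw [Language.mem_kstar_iff_exists_nonempty] at hv
        obtain ⟨S, rfl, hS⟩ := hv
        match S with
        | [] => simp at hvne
        | y :: S' =>
          obtain ⟨hy, _⟩ := hS y (by simp)
          have hy' : y = List.replicate i () := hy
          calc i = y.length := by rw [hy']; simp
          _ ≤ (y :: S').flatten.length := by simp
      -- the word a^i is in phiW φ w
      have hrep : List.replicate i () ∈ phiW φ w := by
        rw [hw]
        have : [List.replicate i ()].flatten ∈ ({List.replicate i ()} : Language Unit)∗ :=
          Language.join_mem_kstar (fun y hy => by
            rw [List.mem_singleton] at hy; exact hy)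
        simpa using this
      obtain ⟨δ, hδw, v, hv, hvne, hvl⟩ := exists_short_factor φ hrep hrepne
      rw [List.length_replicate] at hvl
      have hvmem : v ∈ ({List.replicate i ()} : Language Unit)∗ := by
        rw [← hw]; exact mem_phiW_of_mem φ h0 hδw hv
      have hveq : v.length = i := le_antisymm hvl (hlong v hvmem hvne)
      refine ⟨δ, ?_⟩
      have hiS : i ∈ {n | 0 < n ∧ ∃ u ∈ φ δ, u.length = n} := ⟨by omega, v, hv, hveq⟩
      have hlb : ∀ n ∈ {n | 0 < n ∧ ∃ u ∈ φ δ, u.length = n}, i ≤ n := by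
        rintro n ⟨hn, u, hu, rfl⟩
        have hune : u ≠ [] := by intro h; subst h; simp at hn
        exact hlong u (by rw [← hw]; exact mem_phiW_of_mem φ h0 hδw hu) hune
      have h1 : g δ ≤ i := Nat.sInf_le hiS
      have h2 : i ≤ g δ := hlb _ (Nat.sInf_mem ⟨i, hiS⟩)
      omega
    have hsub : Set.Ici 1 ⊆ Set.range g := by
      intro i hi
      obtain ⟨δ, hδ⟩ := key i hi
      exact ⟨δ, hδ⟩
    exact Set.Ici_infinite 1 ((Set.finite_range g).subset hsub)
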